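/- Let {d_k} be a sequence of nonnegative reals and γ ∈ (0,1) satisfying d_{k+1}² ≤ γ · sup_{⌊(k+1)/2⌋ ≤ l ≤ k} d_l² for all k ≥ 1. Then d_{k+1}² ≤ γ^{⌊log₂(k+1)⌋} d₀²·C for some constant C depending only on d₀ and the initial terms; in particular d_k² = O(k^{−log₂(1/γ)}), i.e., d_k² ≤ C' (k+1)^{−log₂(1/γ)} for some constant C' and all k. -/

import Mathlib

open Filter Topology

theorem stmt_17 (d : ℕ → ℝ) (γ : ℝ) (hγ0 : 0 < γ) (hγ1 : γ < 1)
    (hd : ∀ k, 0 ≤ d k)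
    (hrec : ∀ k, 1 ≤ k → ∀ S : ℝ,
      (∀ l, (k + 1) / 2 ≤ l → l ≤ k → d l ^ 2 ≤ S) →
      d (k + 1) ^ 2 ≤ γ * S) :
    ∃ C' : ℝ, 0 ≤ C' ∧ ∀ k : ℕ,
      d k ^ 2 ≤ C' * ((k : ℝ) + 1) ^ (-(Real.logb 2 (1 / γ))) := by
  set A := d 1 ^ 2 with hA
  have hA0 : 0 ≤ A := sq_nonneg _
  -- key induction
  have key : ∀ k, 1 ≤ k → d k ^ 2 ≤ A * γ ^ Nat.log 2 k := by
    intro k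
    induction k using Nat.strong_induction_on with
    | _ k ih =>
      intro hk
      match k, hk with
      | 1, _ => simp [Nat.log_one_right]; exact le_of_eq hA.symm
      | (j+2), _ =>
        have hL1 : 1 ≤ Nat.log 2 (j + 2) := Nat.log_pos one_lt_two (by omega)
        have hdiv : Nat.log 2 ((j + 2) / 2) = Nat.log 2 (j + 2) - 1 :=
          Nat.log_div_base 2 (j + 2)
        have hstep : d (j + 2) ^ 2 ≤ γ * (A * γ ^ (Nat.log 2 (j + 2) - 1)) := by
          apply hrec (j + 1) (by omega)
          intro l hl1 hl2
          have hl1' : 1 ≤ l := le_trans (by omega) hl1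
          have hlog : Nat.log 2 (j + 2) - 1 ≤ Nat.log 2 l := by
            rw [← hdiv]; exact Nat.log_mono_right hl1
          calc d l ^ 2 ≤ A * γ ^ Nat.log 2 l := ih l (by omega) hl1'
            _ ≤ A * γ ^ (Nat.log 2 (j + 2) - 1) := by
                apply mul_le_mul_of_nonneg_left _ hA0
                exact pow_le_pow_of_le_one hγ0.le hγ1.le hlog
        calc d (j + 2) ^ 2 ≤ γ * (A * γ ^ (Nat.log 2 (j + 2) - 1)) := hstep
          _ = A * γ ^ (Nat.log 2 (j + 2) - 1 + 1) := by ring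
          _ = A * γ ^ Nat.log 2 (j + 2) := by rw [Nat.sub_add_cancel hL1]
  have hexp : -(Real.logb 2 (1 / γ)) = Real.logb 2 γ := by
    rw [one_div, Real.logb_inv, neg_neg]
  refine ⟨(d 0 ^ 2 + A) / γ, div_nonneg (by positivity) hγ0.le, ?_⟩
  intro k
  rw [hexp]
  have hγle1 : γ ≤ 1 := hγ1.le
  rcases Nat.eq_zero_or_pos k with rfl | hk
  · simp only [Nat.cast_zero, zero_add, Real.one_rpow, mul_one]
    rw [le_div_iff₀ hγ0]
    nlinarith [sq_nonneg (d 0), sq_nonneg (d 1)]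
  · set L := Nat.log 2 k with hLdef
    have hklt : (k : ℝ) + 1 ≤ 2 ^ (L + 1) := by
      have := Nat.lt_pow_succ_log_self one_lt_two k
      have : k + 1 ≤ 2 ^ (L + 1) := this
      exact_mod_cast this
    have hk1pos : (0:ℝ) < (k : ℝ) + 1 := by positivity
    have hlogle : Real.logb 2 ((k : ℝ) + 1) ≤ (L : ℝ) + 1 := by
      have h2 : Real.logb 2 ((k:ℝ)+1) ≤ Real.logb 2 ((2:ℝ) ^ (L+1)) :=
        Real.logb_le_logb_of_le (by norm_num) hk1pos hklt
      calc Real.logb 2 ((k:ℝ)+1) ≤ Real.logb 2 ((2:ℝ) ^ (L+1)) := h2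
        _ = (L : ℝ) + 1 := by
            rw [show ((2:ℝ) ^ (L+1)) = (2:ℝ) ^ ((L : ℝ) + 1) by
              rw [← Real.rpow_natCast]; push_cast; ring_nf]
            exact Real.logb_rpow (by norm_num) (by norm_num)
    have h1 : d k ^ 2 ≤ A * γ ^ L := key k hk
    have h2 : γ ^ L = γ ^ (L : ℝ) := (Real.rpow_natCast γ L).symm
    have h3 : γ ^ (L : ℝ) ≤ γ ^ (Real.logb 2 ((k:ℝ)+1) - 1) :=
      Real.rpow_le_rpow_of_exponent_ge hγ0 hγle1 (by linarith)
    have h4 : γ ^ (Real.logb 2 ((k:ℝ)+1) - 1) = γ⁻¹ * γ ^ (Real.logb 2 ((k:ℝ)+1)) := by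
      rw [Real.rpow_sub hγ0, Real.rpow_one, div_eq_inv_mul]
    have h5 : γ ^ (Real.logb 2 ((k:ℝ)+1)) = ((k:ℝ)+1) ^ (Real.logb 2 γ) := by
      rw [Real.rpow_def_of_pos hγ0, Real.rpow_def_of_pos hk1pos, Real.logb, Real.logb]
      ring_nf
    have hrp : (0:ℝ) < ((k:ℝ)+1) ^ (Real.logb 2 γ) := Real.rpow_pos_of_pos hk1pos _
    calc d k ^ 2 ≤ A * γ ^ L := h1
      _ = A * γ ^ (L : ℝ) := by rw [h2]
      _ ≤ A * (γ⁻¹ * ((k:ℝ)+1) ^ (Real.logb 2 γ)) := by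
          rw [← h5, ← h4]; exact mul_le_mul_of_nonneg_left h3 hA0
      _ = A / γ * ((k:ℝ)+1) ^ (Real.logb 2 γ) := by ring
      _ ≤ (d 0 ^ 2 + A) / γ * ((k:ℝ)+1) ^ (Real.logb 2 γ) := by
          apply mul_le_mul_of_nonneg_right _ hrp.le
          gcongr
          nlinarith [sq_nonneg (d 0)]
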